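/- Let 𝔩 : 𝔗 → [0,∞) be positively homogeneous and superadditive on a convex cone 𝔗, and let {W_n} be subsets of 𝔩^{-1}(1) that are uniformly bounded, with W_{n+1} ⊆ cone(W_n), and suppose there is a sequence δ_n ↓ 0 such that for any finite set of pairwise distinct v_0, …, v_k ∈ W_n (k + 1 points) one has 𝔩(v_0 + ⋯ + v_k) ≤ k + 1 + δ_n. Then the closed convex hull of W_n is disjoint from 𝔩^{-1}([1 + 2δ_n, ∞)). -/

import Mathlib

lemma aux_access_18 {V : Type*} [NormedAddCommGroup V] [NormedSpace ℝ V]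
    [FiniteDimensional ℝ V] {s : Set V} (hs : Convex ℝ s) {x : V}
    (hx : x ∈ closure s) : ∃ y ∈ s, openSegment ℝ x y ⊆ s := by
  have hne : s.Nonempty := closure_nonempty_iff.mp ⟨x, hx⟩
  obtain ⟨y, hy⟩ := hne.intrinsicInterior hs
  rw [mem_intrinsicInterior] at hy
  obtain ⟨y', hy', rfl⟩ := hy
  have hxA : x ∈ affineSpan ℝ s :=
    closure_minimal (subset_affineSpan ℝ s) (affineSpan ℝ s).closed_of_finiteDimensional hx
  haveI : Nonempty (affineSpan ℝ s) := ⟨y'⟩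
  let φ := AffineIsometryEquiv.constVSub ℝ y'
  let g : (affineSpan ℝ s).direction →ᵃ[ℝ] V :=
    (affineSpan ℝ s).subtype.comp φ.symm.toAffineEquiv.toAffineMap
  have hgdef : ∀ z, g z = ↑(φ.symm z) := fun z => rfl
  have hs'conv : Convex ℝ (⇑g ⁻¹' s) := hs.affine_preimage g
  have hpre : ⇑g ⁻¹' s = ⇑φ.symm.toHomeomorph ⁻¹' (((↑) : affineSpan ℝ s → V) ⁻¹' s) := rfl
  have hsymm1 : (⇑φ.symm.toHomeomorph) (φ y') = y' := by
    simp
  have hsymm2 : (⇑φ.symm.toHomeomorph) (φ ⟨x, hxA⟩) = ⟨x, hxA⟩ := by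
    simp
  have hyint : φ y' ∈ interior (⇑g ⁻¹' s) := by
    rw [hpre, ← Homeomorph.preimage_interior]
    exact Set.mem_preimage.mpr (by rw [hsymm1]; exact hy')
  have himg2 : (Subtype.val : affineSpan ℝ s → V) '' (Subtype.val ⁻¹' s) = s :=
    Set.image_preimage_eq_of_subset
      (by rw [Subtype.range_coe_subtype]; exact fun z hz => subset_affineSpan ℝ s hz)
  have hcemb : Topology.IsClosedEmbedding ((Subtype.val : affineSpan ℝ s → V)) :=
    Topology.IsClosedEmbedding.subtypeVal (affineSpan ℝ s).closed_of_finiteDimensional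
  have hclo : (Subtype.val : affineSpan ℝ s → V) ''
      closure ((Subtype.val : affineSpan ℝ s → V) ⁻¹' s) = closure s := by
    rw [← hcemb.closure_image_eq, himg2]
  have hxcl0 : (⟨x, hxA⟩ : affineSpan ℝ s) ∈
      closure ((Subtype.val : affineSpan ℝ s → V) ⁻¹' s) := by
    have hx' : x ∈ (Subtype.val : affineSpan ℝ s → V) ''
        closure ((Subtype.val : affineSpan ℝ s → V) ⁻¹' s) := hclo ▸ hx
    obtain ⟨w, hw, hwx⟩ := hx'
    have : w = (⟨x, hxA⟩ : affineSpan ℝ s) := Subtype.ext hwx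
    exact this ▸ hw
  have hxcl : φ (⟨x, hxA⟩ : affineSpan ℝ s) ∈ closure (⇑g ⁻¹' s) := by
    rw [hpre, ← Homeomorph.preimage_closure]
    exact Set.mem_preimage.mpr (by rw [hsymm2]; exact hxcl0)
  have hy'' : (y' : V) ∈ s := by
    have := interior_subset hy'
    exact this
  refine ⟨↑y', hy'', ?_⟩
  have hseg : openSegment ℝ (φ ⟨x, hxA⟩) (φ y') ⊆ ⇑g ⁻¹' s :=
    fun z hz => interior_subset
      (hs'conv.openSegment_closure_interior_subset_interior hxcl hyint hz)
  have e1 : g (φ ⟨x, hxA⟩) = x := by rw [hgdef]; simp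
  have e2 : g (φ y') = ↑y' := by rw [hgdef]; simp
  have himg : g '' openSegment ℝ (φ ⟨x, hxA⟩) (φ y') = openSegment ℝ x ↑y' := by
    rw [image_openSegment, e1, e2]
  intro z hz
  rw [← himg] at hz
  obtain ⟨w, hw, rfl⟩ := hz
  exact hseg hw


theorem stmt_18 (V : Type*) [NormedAddCommGroup V] [NormedSpace ℝ V]
    [FiniteDimensional ℝ V] (T : Set V) (hconv : Convex ℝ T)
    (hcone : ∀ (c : ℝ), 0 ≤ c → ∀ v ∈ T, c • v ∈ T)
    (l : V → ℝ) (hnonneg : ∀ v ∈ T, 0 ≤ l v)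
    (hhom : ∀ (c : ℝ), 0 ≤ c → ∀ v ∈ T, l (c • v) = c * l v)
    (hsuper : ∀ v ∈ T, ∀ w ∈ T, l v + l w ≤ l (v + w))
    (W : ℕ → Set V) (hW : ∀ n, W n ⊆ {v ∈ T | l v = 1})
    (R : ℝ) (hbdd : ∀ n, W n ⊆ Metric.closedBall 0 R)
    (hnest : ∀ n, W (n + 1) ⊆
      {v : V | ∃ c : ℝ, 0 ≤ c ∧ ∃ x ∈ convexHull ℝ (W n), v = c • x})
    (δ : ℕ → ℝ) (hδpos : ∀ n, 0 < δ n) (hδanti : Antitone δ)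
    (hδ0 : Filter.Tendsto δ Filter.atTop (nhds 0))
    (hest : ∀ n (k : ℕ) (v : Fin (k + 1) → V), Function.Injective v →
      (∀ i, v i ∈ W n) → l (∑ i, v i) ≤ (k : ℝ) + 1 + δ n) :
    ∀ n, closure (convexHull ℝ (W n)) ∩ {v ∈ T | 1 + 2 * δ n ≤ l v} = ∅ := by
  have key : ∀ n, ∀ x ∈ convexHull ℝ (W n), l x ≤ 1 + δ n := by
    intro n x hx
    -- T is closed under addition
    have hTadd : ∀ v ∈ T, ∀ w ∈ T, v + w ∈ T := by
      intro v hv w hw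
      have hmid : (1/2 : ℝ) • v + (1/2 : ℝ) • w ∈ T :=
        hconv hv hw (by norm_num) (by norm_num) (by norm_num)
      have := hcone 2 (by norm_num) _ hmid
      rwa [smul_add, smul_smul, smul_smul, show (2:ℝ) * (1/2) = 1 by norm_num, one_smul,
        one_smul] at this
    -- sums of elements of T are in T and l is superadditive on sums
    have hsum : ∀ (u : Finset V) (f : V → V), u.Nonempty → (∀ a ∈ u, f a ∈ T) →
        (∑ a ∈ u, f a) ∈ T ∧ (∑ a ∈ u, l (f a)) ≤ l (∑ a ∈ u, f a) := by
      intro u f hu hf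
      induction hu using Finset.Nonempty.cons_induction with
      | singleton a => simp [hf]
      | cons a u ha hu ih =>
        have hfa : f a ∈ T := hf a (Finset.mem_cons_self a u)
        have hrest : ∀ b ∈ u, f b ∈ T := fun b hb => hf b (Finset.mem_cons_of_mem hb)
        obtain ⟨hmem, hle⟩ := ih hrest
        rw [Finset.sum_cons, Finset.sum_cons]
        refine ⟨hTadd _ hfa _ hmem, ?_⟩
        calc l (f a) + ∑ b ∈ u, l (f b) ≤ l (f a) + l (∑ b ∈ u, f b) := by linarith
          _ ≤ l (f a + ∑ b ∈ u, f b) := hsuper _ hfa _ hmem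
    -- Carathéodory representation
    rw [convexHull_eq_union] at hx
    simp only [Set.mem_iUnion] at hx
    obtain ⟨t, hts, -, hx⟩ := hx
    rw [Finset.mem_convexHull'] at hx
    obtain ⟨w, hw0, hw1, hxe⟩ := hx
    have htne : t.Nonempty := by
      rcases Finset.eq_empty_or_nonempty t with h | h
      · exfalso; rw [h, Finset.sum_empty] at hw1; norm_num at hw1
      · exact h
    have hk : t.card - 1 + 1 = t.card := Nat.succ_pred_eq_of_pos htne.card_pos
    set k := t.card - 1 with hkdef
    -- each element of t
    have haT : ∀ a ∈ t, a ∈ T := fun a ha => (hW n (hts ha)).1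
    have hal : ∀ a ∈ t, l a = 1 := fun a ha => (hW n (hts ha)).2
    have hwle : ∀ a ∈ t, w a ≤ 1 := by
      intro a ha
      calc w a ≤ ∑ b ∈ t, w b := Finset.single_le_sum hw0 ha
        _ = 1 := hw1
    -- the estimate on the sum over t
    have hsumt : l (∑ a ∈ t, a) ≤ (k : ℝ) + 1 + δ n := by
      set v : Fin (k + 1) → V := fun i => ↑(t.equivFin.symm (finCongr hk i)) with hv
      have hinj : Function.Injective v := by
        intro i j hij
        have := Subtype.coe_injective hij
        have := t.equivFin.symm.injective this
        exact (finCongr hk).injective this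
      have hmemv : ∀ i, v i ∈ W n := fun i => hts (t.equivFin.symm (finCongr hk i)).2
      have hsv : ∑ i, v i = ∑ a ∈ t, a := by
        rw [hv]
        rw [Equiv.sum_comp (finCongr hk) (fun j => ((t.equivFin.symm j : V))),
          Equiv.sum_comp t.equivFin.symm (fun a : ↥t => (a : V))]
        exact Finset.sum_coe_sort t (fun a => a)
      have := hest n k v hinj hmemv
      rwa [hsv] at this
    -- x and the complementary sum
    have hxT : (∑ a ∈ t, w a • a) ∈ T ∧ (∑ a ∈ t, l (w a • a)) ≤ l (∑ a ∈ t, w a • a) :=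
      hsum t (fun a => w a • a) htne (fun a ha => hcone _ (hw0 a ha) _ (haT a ha))
    have hyT : (∑ a ∈ t, (1 - w a) • a) ∈ T ∧
        (∑ a ∈ t, l ((1 - w a) • a)) ≤ l (∑ a ∈ t, (1 - w a) • a) :=
      hsum t (fun a => (1 - w a) • a) htne
        (fun a ha => hcone _ (by linarith [hwle a ha]) _ (haT a ha))
    have hxy : (∑ a ∈ t, w a • a) + (∑ a ∈ t, (1 - w a) • a) = ∑ a ∈ t, a := by
      rw [← Finset.sum_add_distrib]
      apply Finset.sum_congr rfl
      intro a _
      rw [← add_smul]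
      norm_num
    have hly : (k : ℝ) ≤ l (∑ a ∈ t, (1 - w a) • a) := by
      have h1 : ∀ a ∈ t, l ((1 - w a) • a) = 1 - w a := by
        intro a ha
        rw [hhom _ (by linarith [hwle a ha]) _ (haT a ha), hal a ha, mul_one]
      have h2 : (∑ a ∈ t, l ((1 - w a) • a)) = (t.card : ℝ) - 1 := by
        rw [Finset.sum_congr rfl h1, Finset.sum_sub_distrib, hw1, Finset.sum_const,
          nsmul_eq_mul, mul_one]
      have h3 : ((k : ℝ)) = (t.card : ℝ) - 1 := by
        have : ((k + 1 : ℕ) : ℝ) = (t.card : ℝ) := by rw [hk]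
        push_cast at this
        linarith
      linarith [hyT.2]
    have hchain : l (∑ a ∈ t, w a • a) + (k : ℝ) ≤ (k : ℝ) + 1 + δ n := by
      have := hsuper _ hxT.1 _ hyT.1
      rw [hxy] at this
      linarith [hly, hsumt]
    rw [← hxe]
    linarith
  intro n
  rw [Set.eq_empty_iff_forall_notMem]
  rintro x ⟨hxc, hxT, hxl⟩
  obtain ⟨y, hyC, hseg⟩ := aux_access_18 (convex_convexHull ℝ (W n)) hxc
  have hWT : W n ⊆ T := fun v hv => (hW n hv).1
  have hCT : convexHull ℝ (W n) ⊆ T := convexHull_min hWT hconv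
  have hyT : y ∈ T := hCT hyC
  have hd : 0 < δ n := hδpos n
  set d := δ n with hddef
  set t : ℝ := d / (2 * (1 + 2 * d)) with htdef
  have hden : 0 < 1 + 2 * d := by linarith
  have ht0 : 0 < t := by positivity
  have ht1 : t < 1 := by
    rw [htdef, div_lt_one (by linarith)]
    linarith
  have hz : (1 - t) • x + t • y ∈ convexHull ℝ (W n) :=
    hseg ⟨1 - t, t, by linarith, ht0, by ring, rfl⟩
  have hlz : l ((1 - t) • x + t • y) ≤ 1 + d := key n _ hz
  have hcc : l ((1 - t) • x) + l (t • y) ≤ l ((1 - t) • x + t • y) :=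
    hsuper _ (hcone _ (by linarith) _ hxT) _ (hcone _ ht0.le _ hyT)
  rw [hhom _ (by linarith) _ hxT, hhom _ ht0.le _ hyT] at hcc
  have hly0 : 0 ≤ l y := hnonneg y hyT
  have hE : t * (1 + 2 * d) = d / 2 := by
    rw [htdef]
    field_simp
  have hm : (1 - t) * (1 + 2 * d) ≤ (1 - t) * l x :=
    mul_le_mul_of_nonneg_left hxl (by linarith)
  have hexp : (1 - t) * (1 + 2 * d) = 1 + 2 * d - t * (1 + 2 * d) := by ring
  have htly : 0 ≤ t * l y := mul_nonneg ht0.le hly0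
  linarith
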